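/- arXiv:1207.1269 — 6 statements merged into one kernel-verified Lean document; each statement's English description precedes it below -/
import Mathlib

section
/- Let 𝒜 ⊆ ℬ be unital Banach algebras with common unit e satisfying ‖e‖_𝒜 = ‖e‖_ℬ = 1, and suppose the norm on 𝒜 is a differential norm: ‖ab‖_𝒜 ≤ C(‖a‖_𝒜‖b‖_ℬ + ‖b‖_𝒜‖a‖_ℬ) for all a,b ∈ 𝒜. If the norms ‖·‖_𝒜 and ‖·‖_ℬ are not equivalent on 𝒜 (i.e., inf_{a∈𝒜, a≠0} ‖a‖_ℬ/‖a‖_𝒜 = 0), then C ≥ 1. -/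
/-- If `𝒜 ⊆ ℬ` are unital Banach algebras with common unit (`‖e‖_𝒜 = ‖e‖_ℬ = 1`),
the norm `nA` on `𝒜` is a differential norm with structure constant `C`, and the norms
are not equivalent on `𝒜` (the infimum of `‖a‖_ℬ/‖a‖_𝒜` is `0`), then `C ≥ 1`. -/
theorem stmt_1 {B : Type*} [NormedRing B] [NormedAlgebra ℂ B] [NormOneClass B]
    (S : Subalgebra ℂ B) (nA : B → ℝ) (C : ℝ)
    (h1 : nA 1 = 1)
    (hdiff : ∀ a ∈ S, ∀ b ∈ S, nA (a * b) ≤ C * (nA a * ‖b‖ + nA b * ‖a‖))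
    (hpos : ∀ a ∈ S, a ≠ 0 → 0 < nA a)
    (hnoneq : ∀ ε : ℝ, 0 < ε → ∃ a ∈ S, a ≠ 0 ∧ ‖a‖ ≤ ε * nA a) :
    1 ≤ C := by
  have key : ∀ ε : ℝ, 0 < ε → ∃ a : B, 0 < nA a ∧ 0 ≤ ‖a‖ ∧ ‖a‖ ≤ ε * nA a ∧
      nA a ≤ C * (nA a + ‖a‖) := by
    intro ε hε
    obtain ⟨a, haS, ha0, hale⟩ := hnoneq ε hε
    have h := hdiff a haS 1 (one_mem S)
    rw [mul_one, h1, norm_one] at h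
    exact ⟨a, hpos a haS ha0, norm_nonneg a, hale, by linarith⟩
  have hC0 : 0 ≤ C := by
    by_contra hC
    push_neg at hC
    obtain ⟨a, h1', h2', h3', h4'⟩ := key 1 one_pos
    nlinarith
  by_contra hC
  push_neg at hC
  have hCpos : 0 < C := by
    rcases hC0.lt_or_eq with h | h
    · exact h
    · obtain ⟨a, h1', h2', h3', h4'⟩ := key 1 one_pos
      nlinarith
  obtain ⟨a, h1', h2', h3', h4'⟩ := key ((1 - C) / (2 * C)) (div_pos (by linarith) (by linarith))
  have : ‖a‖ ≤ (1 - C) / (2 * C) * nA a := h3'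
  have h5 : C * ‖a‖ ≤ (1 - C) / 2 * nA a := by
    rw [div_mul_eq_mul_div, le_div_iff₀ (by linarith)] at this
    nlinarith
  nlinarith
end

section
/- Let 𝒜 ⊆ ℬ be unital Banach algebras with common unit, where the norm on 𝒜 satisfies ‖ab‖_𝒜 ≤ C(‖a‖_𝒜‖b‖_ℬ + ‖b‖_𝒜‖a‖_ℬ). Then for every c ∈ 𝒜, the spectral radii satisfy ρ_𝒜(c) = ρ_ℬ(c). -/
open scoped ENNReal

open Filter Topology

/-- If `𝒜 ⊆ ℬ` are unital Banach algebras with common unit, the inclusion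
`ι : 𝒜 → ℬ` is a continuous algebra homomorphism, and the norm of `𝒜` is a
differential norm (`‖ab‖_𝒜 ≤ C(‖a‖_𝒜‖b‖_ℬ + ‖b‖_𝒜‖a‖_ℬ)`), then the spectral radii
agree: `ρ_𝒜(c) = ρ_ℬ(c)` for every `c ∈ 𝒜`. -/
theorem stmt_2 {A B : Type*} [NormedRing A] [NormedAlgebra ℂ A] [CompleteSpace A]
    [NormOneClass A] [NormedRing B] [NormedAlgebra ℂ B] [CompleteSpace B] [NormOneClass B]
    (ι : A →ₐ[ℂ] B) (D C : ℝ) (hD : 0 < D)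
    (hcont : ∀ a : A, ‖ι a‖ ≤ D * ‖a‖)
    (hdiff : ∀ a b : A, ‖a * b‖ ≤ C * (‖a‖ * ‖ι b‖ + ‖b‖ * ‖ι a‖)) :
    ∀ c : A, spectralRadius ℂ c = spectralRadius ℂ (ι c) := by
  intro c
  set L := spectralRadius ℂ c with hL
  set M := spectralRadius ℂ (ι c) with hM
  -- easy direction: M ≤ L
  have hML : M ≤ L := by
    rw [hM, hL, spectralRadius, spectralRadius]
    exact iSup₂_le fun k hk =>
      le_iSup₂ (f := fun k (_ : k ∈ spectrum ℂ c) => (‖k‖₊ : ℝ≥0∞)) k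
        (AlgHom.spectrum_apply_subset ι c hk)
  -- C ≥ 1/2 > 0
  have hC : (1 : ℝ) ≤ 2 * C := by
    have := hdiff 1 1
    simp only [one_mul, norm_one, map_one, mul_one] at this
    linarith
  have hCpos : 0 < 2 * C := by linarith
  have hLfin : L ≠ ∞ :=
    ((spectrum.spectralRadius_le_nnnorm (𝕜 := ℂ) c).trans_lt ENNReal.coe_lt_top).ne
  have hMfin : M ≠ ∞ :=
    ((spectrum.spectralRadius_le_nnnorm (𝕜 := ℂ) (ι c)).trans_lt ENNReal.coe_lt_top).ne
  -- key pointwise inequality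
  have key : ∀ n : ℕ, (‖c ^ (2 * n)‖₊ : ℝ≥0∞) ^ (1 / (2 * n : ℕ) : ℝ) ≤
      (ENNReal.ofReal (2 * C)) ^ (1 / (2 * n : ℕ) : ℝ) *
      ((‖c ^ n‖₊ : ℝ≥0∞) ^ (1 / (n : ℕ) : ℝ)) ^ ((1 : ℝ) / 2) *
      ((‖(ι c) ^ n‖₊ : ℝ≥0∞) ^ (1 / (n : ℕ) : ℝ)) ^ ((1 : ℝ) / 2) := by
    intro n
    rcases Nat.eq_zero_or_pos n with rfl | hn
    · simp
    have hιpow : ι (c ^ n) = (ι c) ^ n := map_pow ι c n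
    have h1 : ‖c ^ (2 * n)‖ ≤ 2 * C * (‖c ^ n‖ * ‖(ι c) ^ n‖) := by
      have := hdiff (c ^ n) (c ^ n)
      rw [← pow_add] at this
      have h2n : n + n = 2 * n := by ring
      rw [h2n, hιpow] at this
      nlinarith [this]
    have h1' : (‖c ^ (2 * n)‖₊ : ℝ≥0∞) ≤ ENNReal.ofReal (2 * C) *
        ((‖c ^ n‖₊ : ℝ≥0∞) * (‖(ι c) ^ n‖₊ : ℝ≥0∞)) := by
      rw [← enorm_eq_nnnorm, ← enorm_eq_nnnorm, ← enorm_eq_nnnorm, ← ofReal_norm, ← ofReal_norm,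
        ← ofReal_norm, ← ENNReal.ofReal_mul (norm_nonneg _),
        ← ENNReal.ofReal_mul (by positivity)]
      exact ENNReal.ofReal_le_ofReal h1
    have hexp : (0 : ℝ) ≤ 1 / (2 * n : ℕ) := by positivity
    calc (‖c ^ (2 * n)‖₊ : ℝ≥0∞) ^ (1 / (2 * n : ℕ) : ℝ)
        ≤ (ENNReal.ofReal (2 * C) * ((‖c ^ n‖₊ : ℝ≥0∞) * (‖(ι c) ^ n‖₊ : ℝ≥0∞)))
            ^ (1 / (2 * n : ℕ) : ℝ) := ENNReal.rpow_le_rpow h1' hexp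
      _ = (ENNReal.ofReal (2 * C)) ^ (1 / (2 * n : ℕ) : ℝ) *
          ((‖c ^ n‖₊ : ℝ≥0∞) ^ (1 / (2 * n : ℕ) : ℝ) *
           (‖(ι c) ^ n‖₊ : ℝ≥0∞) ^ (1 / (2 * n : ℕ) : ℝ)) := by
          rw [ENNReal.mul_rpow_of_nonneg _ _ hexp, ENNReal.mul_rpow_of_nonneg _ _ hexp]
      _ = (ENNReal.ofReal (2 * C)) ^ (1 / (2 * n : ℕ) : ℝ) *
          ((‖c ^ n‖₊ : ℝ≥0∞) ^ (1 / (n : ℕ) : ℝ)) ^ ((1 : ℝ) / 2) *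
          ((‖(ι c) ^ n‖₊ : ℝ≥0∞) ^ (1 / (n : ℕ) : ℝ)) ^ ((1 : ℝ) / 2) := by
          rw [← ENNReal.rpow_mul, ← ENNReal.rpow_mul, mul_assoc]
          congr 3 <;>
          · have hn' : (n : ℝ) ≠ 0 := Nat.cast_ne_zero.mpr hn.ne'
            push_cast
            field_simp
  -- limits
  have hsub : Tendsto (fun n : ℕ => 2 * n) atTop atTop :=
    tendsto_atTop_atTop_of_monotone (fun a b h => by omega) (fun b => ⟨b, by omega⟩)
  have hLHS : Tendsto (fun n : ℕ => (‖c ^ (2 * n)‖₊ : ℝ≥0∞) ^ (1 / (2 * n : ℕ) : ℝ)) atTop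
      (𝓝 L) := (spectrum.pow_nnnorm_pow_one_div_tendsto_nhds_spectralRadius c).comp hsub
  have hexp0 : Tendsto (fun n : ℕ => (1 / (2 * n : ℕ) : ℝ)) atTop (𝓝 0) := by
    exact tendsto_one_div_atTop_nhds_zero_nat.comp hsub
  have hconst : Tendsto (fun n : ℕ => (ENNReal.ofReal (2 * C)) ^ (1 / (2 * n : ℕ) : ℝ)) atTop
      (𝓝 1) := by
    have hre : Tendsto (fun n : ℕ => (2 * C) ^ (1 / (2 * n : ℕ) : ℝ)) atTop (𝓝 1) := by
      have := (Real.continuousAt_const_rpow (a := 2 * C) (b := 0) hCpos.ne').tendsto.comp hexp0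
      simpa [Function.comp_def] using this
    have := (ENNReal.continuous_ofReal.tendsto 1).comp hre
    simp only [ENNReal.ofReal_one] at this
    refine this.congr fun n => ?_
    rw [Function.comp_apply, ← ENNReal.ofReal_rpow_of_pos hCpos]
  have hmidL : Tendsto (fun n : ℕ => ((‖c ^ n‖₊ : ℝ≥0∞) ^ (1 / (n : ℕ) : ℝ)) ^ ((1 : ℝ) / 2))
      atTop (𝓝 (L ^ ((1 : ℝ) / 2))) :=
    (spectrum.pow_nnnorm_pow_one_div_tendsto_nhds_spectralRadius c).ennrpow_const _
  have hmidM : Tendsto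
      (fun n : ℕ => ((‖(ι c) ^ n‖₊ : ℝ≥0∞) ^ (1 / (n : ℕ) : ℝ)) ^ ((1 : ℝ) / 2))
      atTop (𝓝 (M ^ ((1 : ℝ) / 2))) :=
    (spectrum.pow_nnnorm_pow_one_div_tendsto_nhds_spectralRadius (ι c)).ennrpow_const _
  have hLhalf_fin : L ^ ((1 : ℝ) / 2) ≠ ∞ :=
    ENNReal.rpow_ne_top_of_nonneg (by norm_num) hLfin
  have hMhalf_fin : M ^ ((1 : ℝ) / 2) ≠ ∞ :=
    ENNReal.rpow_ne_top_of_nonneg (by norm_num) hMfin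
  have hRHS : Tendsto (fun n : ℕ =>
      (ENNReal.ofReal (2 * C)) ^ (1 / (2 * n : ℕ) : ℝ) *
      ((‖c ^ n‖₊ : ℝ≥0∞) ^ (1 / (n : ℕ) : ℝ)) ^ ((1 : ℝ) / 2) *
      ((‖(ι c) ^ n‖₊ : ℝ≥0∞) ^ (1 / (n : ℕ) : ℝ)) ^ ((1 : ℝ) / 2)) atTop
      (𝓝 (1 * L ^ ((1 : ℝ) / 2) * M ^ ((1 : ℝ) / 2))) :=
    (ENNReal.Tendsto.mul
      (ENNReal.Tendsto.mul hconst (Or.inl one_ne_zero) hmidL (Or.inr ENNReal.one_ne_top))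
      (Or.inr hMhalf_fin) hmidM
      (Or.inr (ENNReal.mul_ne_top ENNReal.one_ne_top hLhalf_fin)))
  have hle : L ≤ L ^ ((1 : ℝ) / 2) * M ^ ((1 : ℝ) / 2) := by
    have := le_of_tendsto_of_tendsto' hLHS hRHS key
    simpa using this
  have hLM : L ≤ M := by
    rcases eq_or_ne L 0 with h0 | h0
    · simp [h0]
    · have hLhalf0 : L ^ ((1 : ℝ) / 2) ≠ 0 := by
        simp [ENNReal.rpow_eq_zero_iff, h0, hLfin]
      have hsplit : L = L ^ ((1 : ℝ) / 2) * L ^ ((1 : ℝ) / 2) := by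
        rw [← ENNReal.rpow_add _ _ h0 hLfin]
        norm_num
      have : L ^ ((1 : ℝ) / 2) * L ^ ((1 : ℝ) / 2) ≤ L ^ ((1 : ℝ) / 2) * M ^ ((1 : ℝ) / 2) :=
        hsplit ▸ hle
      have hhalf : L ^ ((1 : ℝ) / 2) ≤ M ^ ((1 : ℝ) / 2) :=
        (ENNReal.mul_le_mul_iff_right hLhalf0 hLhalf_fin).mp this
      calc L = (L ^ ((1 : ℝ) / 2)) ^ (2 : ℝ) := by
              rw [← ENNReal.rpow_mul]; norm_num
        _ ≤ (M ^ ((1 : ℝ) / 2)) ^ (2 : ℝ) :=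
              ENNReal.rpow_le_rpow hhalf (by norm_num)
        _ = M := by
              rw [← ENNReal.rpow_mul]; norm_num
  exact le_antisymm hLM hML
end

section
/- Let ℬ be a unital C*-algebra and 𝒜 ⊆ ℬ a *-subalgebra with the same unit whose norm satisfies ‖ab‖_𝒜 ≤ C(‖a‖_𝒜‖b‖_ℬ + ‖b‖_𝒜‖a‖_ℬ) and ‖a*‖_𝒜 = ‖a‖_𝒜. If a ∈ 𝒜 is invertible in ℬ, then a⁻¹ ∈ 𝒜 and ‖a⁻¹‖_𝒜 ≤ (‖a‖_𝒜/‖a‖_ℬ²) · ∏_{k=0}^∞ ( 1 + 2 (‖a‖_𝒜²/‖a‖_ℬ²) (2C)^k ( 1 − 1/(‖a‖_ℬ²‖a⁻¹‖_ℬ²) )^{2^k − 1} ). -/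
open scoped Pointwise

open Finset in
private lemma aux_sum_pow_le_prod {R : Type*} [NormedRing R] [NormOneClass R] (c : R) :
    ∀ N : ℕ, ∑ n ∈ Finset.range (2^N), ‖c^n‖ ≤ ∏ k ∈ Finset.range N, (1 + ‖c^(2^k)‖) := by
  intro N
  induction N with
  | zero => simp
  | succ N ih =>
    have h2 : 2^(N+1) = 2^N + 2^N := by ring
    have hS0 : (0:ℝ) ≤ ∑ n ∈ Finset.range (2^N), ‖c^n‖ :=
      Finset.sum_nonneg fun _ _ => norm_nonneg _
    have hsplit : ∑ n ∈ Finset.range (2^(N+1)), ‖c^n‖ =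
        (∑ n ∈ Finset.range (2^N), ‖c^n‖) + ∑ n ∈ Finset.range (2^N), ‖c^(2^N + n)‖ := by
      rw [h2, Finset.sum_range_add]
    have hshift : ∑ n ∈ Finset.range (2^N), ‖c^(2^N + n)‖ ≤
        ‖c^(2^N)‖ * ∑ n ∈ Finset.range (2^N), ‖c^n‖ := by
      rw [Finset.mul_sum]
      refine Finset.sum_le_sum fun n _ => ?_
      rw [pow_add]
      exact norm_mul_le _ _
    have hfac : (∑ n ∈ Finset.range (2^N), ‖c^n‖) * (1 + ‖c^(2^N)‖) ≤
        (∏ k ∈ Finset.range N, (1 + ‖c^(2^k)‖)) * (1 + ‖c^(2^N)‖) := by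
      have : (0:ℝ) ≤ 1 + ‖c^(2^N)‖ := by positivity
      exact mul_le_mul_of_nonneg_right ih this
    rw [hsplit, Finset.prod_range_succ]
    nlinarith [norm_nonneg (c^(2^N))]

/-- The key C*-algebra estimate: if `x` is invertible with inverse `xinv` in a unital
C*-algebra, then `‖1 - ‖x‖⁻²•(x*x)‖ ≤ 1 - 1/(‖x‖²‖x⁻¹‖²)`. -/
private lemma aux_cstar_bound {B : Type*}
    [NormedRing B] [StarRing B] [CStarRing B] [NormedAlgebra ℂ B] [CompleteSpace B]
    [StarModule ℂ B] [Nontrivial B]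
    (x : B) (hx : IsUnit x) (xinv : B) (hmulinv : x * xinv = 1) (hinvmul : xinv * x = 1)
    (hx0 : (0:ℝ) < ‖x‖) (hxinv0 : (0:ℝ) < ‖xinv‖) :
    ‖1 - ((((‖x‖^2 : ℝ) : ℂ))⁻¹ • (star x * x))‖ ≤ 1 - 1 / (‖x‖ ^ 2 * ‖xinv‖ ^ 2) := by
  letI : CStarAlgebra B := ⟨⟩
  set z : ℂ := ((‖x‖^2 : ℝ) : ℂ) with hz_def
  have hz0 : z ≠ 0 := by
    simp only [hz_def, ne_eq, Complex.ofReal_eq_zero]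
    positivity
  set P : B := star x * x with hP_def
  set Q : B := 1 - z⁻¹ • P with hQ_def
  have hP_norm : ‖P‖ = ‖x‖^2 := by
    rw [hP_def, CStarRing.norm_star_mul_self, sq]
  have hP_sa : IsSelfAdjoint P := IsSelfAdjoint.star_mul_self x
  have hP_unit : IsUnit P := hx.star.mul hx
  set U : Bˣ := hP_unit.unit with hU_def
  have hU : (U : B) = P := hP_unit.unit_spec
  have hUinv : ((U⁻¹ : Bˣ) : B) = xinv * star xinv := by
    refine Units.inv_eq_of_mul_eq_one_left ?_
    rw [hU, hP_def]
    calc xinv * star xinv * (star x * x) = xinv * (star xinv * star x) * x := by simp [mul_assoc]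
      _ = xinv * star (x * xinv) * x := by rw [star_mul]
      _ = xinv * x := by rw [hmulinv, star_one, mul_one]
      _ = 1 := hinvmul
  have hUinv_norm : ‖((U⁻¹ : Bˣ) : B)‖ ≤ ‖xinv‖^2 := by
    rw [hUinv, sq]
    calc ‖xinv * star xinv‖ ≤ ‖xinv‖ * ‖star xinv‖ := norm_mul_le _ _
      _ = ‖xinv‖ * ‖xinv‖ := by rw [norm_star]
  have hUinv_pos : (0:ℝ) < ‖((U⁻¹ : Bˣ) : B)‖ := by
    refine norm_pos_iff.mpr ?_
    exact Units.ne_zero _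
  -- bounds on the real spectrum of P
  have hspecP : ∀ t : ℝ, t ∈ spectrum ℝ P → ‖((U⁻¹ : Bˣ) : B)‖⁻¹ ≤ t ∧ t ≤ ‖x‖^2 := by
    intro t ht
    have ht0 : 0 ≤ t := spectrum_star_mul_self_nonneg t ht
    have htn : t ≠ 0 := by
      rintro rfl
      exact spectrum.zero_notMem ℝ hP_unit ht
    have ht0' : 0 < t := lt_of_le_of_ne ht0 (Ne.symm htn)
    constructor
    · have hmem' : ((Units.mk0 t htn : ℝˣ) : ℝ) ∈ spectrum ℝ ((U : Bˣ) : B) := by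
        rw [hU]; exact ht
      have hmem := spectrum.inv_mem_iff.mp hmem'
      simp only [Units.val_inv_eq_inv_val, Units.val_mk0] at hmem
      have h1 : ‖(t⁻¹ : ℝ)‖ ≤ ‖((U⁻¹ : Bˣ) : B)‖ := spectrum.norm_le_norm_of_mem hmem
      have h2 : t⁻¹ ≤ ‖((U⁻¹ : Bˣ) : B)‖ := by
        rw [Real.norm_eq_abs, abs_of_pos (by positivity)] at h1
        exact h1
      rw [inv_eq_one_div, div_le_iff₀ hUinv_pos]
      calc (1:ℝ) = t * t⁻¹ := (mul_inv_cancel₀ htn).symm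
        _ ≤ t * ‖((U⁻¹ : Bˣ) : B)‖ := mul_le_mul_of_nonneg_left h2 ht0
    · have := spectrum.norm_le_norm_of_mem ht
      rw [Real.norm_eq_abs, abs_of_pos ht0'] at this
      rw [← hP_norm]
      exact this
  -- Q is selfadjoint
  have hQ_sa : IsSelfAdjoint Q := by
    have : star Q = Q := by
      simp only [hQ_def, star_sub, star_one, star_smul, hP_sa.star_eq, hz_def,
        star_inv₀, Complex.star_def, Complex.conj_ofReal]
    exact this
  set d : ℝ := 1 - 1 / (‖x‖ ^ 2 * ‖xinv‖ ^ 2) with hd_def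
  have hnx2 : (0:ℝ) < ‖x‖^2 := by positivity
  have hspec : ∀ ζ ∈ spectrum ℂ Q, ‖ζ‖ ≤ d := by
    intro ζ hζ
    have hζre : ζ = (ζ.re : ℂ) := hQ_sa.mem_spectrum_eq_re hζ
    have hQeq : Q = algebraMap ℂ B 1 - z⁻¹ • P := by rw [hQ_def, map_one]
    have hσ : spectrum ℂ Q = ({1} : Set ℂ) - spectrum ℂ (z⁻¹ • P) := by
      rw [hQeq, ← spectrum.singleton_sub_eq]
    rw [hσ] at hζ
    rw [Set.mem_sub] at hζ
    obtain ⟨m, hm, v, hv, hmv⟩ := hζ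
    rw [Set.mem_singleton_iff] at hm
    subst hm
    -- v ∈ spectrum ℂ (z⁻¹ • P)
    set zu : ℂˣ := Units.mk0 z hz0 with hzu_def
    have hsmul : z⁻¹ • P = (zu⁻¹ : ℂˣ) • P := by
      simp [hzu_def, Units.smul_def]
    rw [hsmul, spectrum.unit_smul_eq_smul] at hv
    obtain ⟨ω, hω, rfl⟩ := hv
    have hωre : ω = (ω.re : ℂ) := hP_sa.mem_spectrum_eq_re hω
    have hωmem : (ω.re : ℝ) ∈ spectrum ℝ P := by
      have : algebraMap ℝ ℂ ω.re ∈ spectrum ℂ P := by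
        rw [Complex.coe_algebraMap, ← hωre]; exact hω
      exact spectrum.of_algebraMap_mem ℂ this
    obtain ⟨hlow, hhigh⟩ := hspecP ω.re hωmem
    -- now everything is real
    set t : ℝ := ω.re with ht_def
    have hζval : ζ = ((1 - t / ‖x‖^2 : ℝ) : ℂ) := by
      rw [← hmv, hωre]
      push_cast
      rw [hzu_def]
      simp only [Units.smul_def, Units.val_inv_eq_inv_val, Units.val_mk0, smul_eq_mul]
      rw [hz_def]
      push_cast
      rw [div_eq_inv_mul]
    rw [hζval, Complex.norm_real, Real.norm_eq_abs]
    have hUpos := hUinv_pos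
    have hxinv2 : (0:ℝ) < ‖xinv‖^2 := by positivity
    have hinvle : (‖xinv‖^2)⁻¹ ≤ ‖((U⁻¹ : Bˣ) : B)‖⁻¹ := by
      exact inv_anti₀ hUpos hUinv_norm
    have ht_ge : (‖xinv‖^2)⁻¹ ≤ t := le_trans hinvle hlow
    have h1 : 1 / (‖x‖ ^ 2 * ‖xinv‖ ^ 2) ≤ t / ‖x‖^2 := by
      calc 1 / (‖x‖ ^ 2 * ‖xinv‖ ^ 2) = (‖xinv‖^2)⁻¹ / ‖x‖^2 := by
            rw [one_div, mul_inv, mul_comm, div_eq_mul_inv]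
        _ ≤ t / ‖x‖^2 := by gcongr
    have h2 : t / ‖x‖^2 ≤ 1 := by
      rw [div_le_one hnx2]; exact hhigh
    rw [abs_of_nonneg (by linarith)]
    rw [hd_def]
    linarith
  have hd0 : 0 ≤ d := by
    have h1 : 1 ≤ ‖x‖ * ‖xinv‖ := by
      calc (1:ℝ) = ‖(1:B)‖ := norm_one.symm
        _ = ‖x * xinv‖ := by rw [hmulinv]
        _ ≤ ‖x‖ * ‖xinv‖ := norm_mul_le _ _
    have h2 : 1 ≤ ‖x‖^2 * ‖xinv‖^2 := by nlinarith
    have h3 : 1 / (‖x‖^2 * ‖xinv‖^2) ≤ 1 := by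
      rw [div_le_one (by positivity)]; exact h2
    rw [hd_def]; linarith
  have hrad : spectralRadius ℂ Q ≤ ENNReal.ofReal d := by
    refine iSup₂_le fun ζ hζ => ?_
    rw [← ENNReal.ofReal_coe_nnreal, coe_nnnorm]
    exact ENNReal.ofReal_le_ofReal (hspec ζ hζ)
  rw [hQ_sa.spectralRadius_eq_nnnorm, ← ENNReal.ofReal_coe_nnreal, coe_nnnorm] at hrad
  exact (ENNReal.ofReal_le_ofReal_iff hd0).mp hrad

set_option maxHeartbeats 2000000 in
/-- Norm-controlled inversion in a differential `*`-subalgebra `𝒜` (a Banach `*`-algebra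
`A` embedded by a unit-preserving `*`-algebra homomorphism `ι` into a unital C*-algebra
`B`) whose norm is a differential norm with structure constant `C`: if `a ∈ 𝒜` is
invertible in `ℬ`, then `a⁻¹ ∈ 𝒜` and
`‖a⁻¹‖_𝒜 ≤ (‖a‖_𝒜/‖a‖_ℬ²) ∏_{k=0}^∞ (1 + 2(‖a‖_𝒜²/‖a‖_ℬ²)(2C)^k (1-1/(‖a‖_ℬ²‖a⁻¹‖_ℬ²))^{2^k-1})`. -/
theorem stmt_8 {A B : Type*} [NormedRing A] [NormedAlgebra ℂ A] [CompleteSpace A]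
    [StarRing A] [NormOneClass A]
    [NormedRing B] [StarRing B] [CStarRing B] [NormedAlgebra ℂ B] [CompleteSpace B]
    [StarModule ℂ B] [Nontrivial B]
    (ι : A →ₐ[ℂ] B) (hinj : Function.Injective ι)
    (hstar : ∀ x : A, ι (star x) = star (ι x))
    (hstarnorm : ∀ x : A, ‖star x‖ = ‖x‖)
    (C : ℝ)
    (hdiff : ∀ x y : A, ‖x * y‖ ≤ C * (‖x‖ * ‖ι y‖ + ‖y‖ * ‖ι x‖))
    (a : A) (ha : IsUnit (ι a)) :
    ∃ b : A, ι b = Ring.inverse (ι a) ∧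
      ‖b‖ ≤ ‖a‖ / ‖ι a‖ ^ 2 *
        ∏' k : ℕ, (1 + 2 * (‖a‖ ^ 2 / ‖ι a‖ ^ 2) * (2 * C) ^ k *
          (1 - 1 / (‖ι a‖ ^ 2 * ‖Ring.inverse (ι a)‖ ^ 2)) ^ (2 ^ k - 1)) := by
  letI : CStarAlgebra B := ⟨⟩
  -- contractivity of ι
  have hcontr : ∀ y : A, ‖ι y‖ ≤ ‖y‖ := by
    intro y
    have hsa : IsSelfAdjoint (ι (star y * y)) := by
      rw [map_mul, hstar]; exact IsSelfAdjoint.star_mul_self (ι y)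
    have h1 : spectralRadius ℂ (ι (star y * y)) ≤ spectralRadius ℂ (star y * y) :=
      iSup_le_iSup_of_subset (AlgHom.spectrum_apply_subset ι _)
    have h2 := hsa.spectralRadius_eq_nnnorm
    have h3 : (‖ι (star y * y)‖₊ : ENNReal) ≤ (‖star y * y‖₊ : ENNReal) :=
      h2 ▸ h1.trans (spectrum.spectralRadius_le_nnnorm _)
    have h4 : ‖ι (star y * y)‖ ≤ ‖star y * y‖ := by exact_mod_cast h3
    have h5 : ‖ι y‖ * ‖ι y‖ ≤ ‖y‖ * ‖y‖ := by
      calc ‖ι y‖ * ‖ι y‖ = ‖star (ι y) * ι y‖ := (CStarRing.norm_star_mul_self).symm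
        _ = ‖ι (star y * y)‖ := by rw [map_mul, hstar]
        _ ≤ ‖star y * y‖ := h4
        _ ≤ ‖star y‖ * ‖y‖ := norm_mul_le _ _
        _ = ‖y‖ * ‖y‖ := by rw [hstarnorm]
    nlinarith [norm_nonneg (ι y), norm_nonneg y]
  have hC : 1 ≤ 2 * C := by
    have := hdiff 1 1
    simp only [mul_one, norm_one, map_one, one_mul] at this
    linarith
  have hC0 : 0 ≤ C := by linarith
  -- invertibility data
  set xinv := Ring.inverse (ι a) with hxinv_def
  have hmulinv : ι a * xinv = 1 := Ring.mul_inverse_cancel _ ha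
  have hinvmul : xinv * ι a = 1 := Ring.inverse_mul_cancel _ ha
  have hx0 : (0:ℝ) < ‖ι a‖ := by
    rcases eq_or_ne (ι a) 0 with h | h
    · exfalso; rw [h, zero_mul] at hmulinv; exact one_ne_zero hmulinv.symm
    · exact norm_pos_iff.mpr h
  have hxinv0 : (0:ℝ) < ‖xinv‖ := by
    rcases eq_or_ne xinv 0 with h | h
    · exfalso; rw [h, mul_zero] at hmulinv; exact one_ne_zero hmulinv.symm
    · exact norm_pos_iff.mpr h
  have ha0 : (0:ℝ) < ‖a‖ := lt_of_lt_of_le hx0 (hcontr a)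
  set d : ℝ := 1 - 1 / (‖ι a‖ ^ 2 * ‖xinv‖ ^ 2) with hd_def
  have hd0 : 0 ≤ d := by
    have h1 : 1 ≤ ‖ι a‖ * ‖xinv‖ := by
      calc (1:ℝ) = ‖(1:B)‖ := norm_one.symm
        _ = ‖ι a * xinv‖ := by rw [hmulinv]
        _ ≤ ‖ι a‖ * ‖xinv‖ := norm_mul_le _ _
    have h2 : 1 ≤ ‖ι a‖^2 * ‖xinv‖^2 := by nlinarith
    have h3 : 1 / (‖ι a‖^2 * ‖xinv‖^2) ≤ 1 := by
      rw [div_le_one (by positivity)]; exact h2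
    rw [hd_def]; linarith
  have hd1 : d < 1 := by
    rw [hd_def]
    have : 0 < 1 / (‖ι a‖^2 * ‖xinv‖^2) := by positivity
    linarith
  -- main objects
  set z : ℂ := ((‖ι a‖^2 : ℝ) : ℂ) with hz_def
  have hz0 : z ≠ 0 := by
    simp only [hz_def, ne_eq, Complex.ofReal_eq_zero]
    positivity
  set p : A := star a * a with hp_def
  set c : A := 1 - z⁻¹ • p with hc_def
  have hnormz : ‖z‖ = ‖ι a‖^2 := by
    rw [hz_def, Complex.norm_real, Real.norm_eq_abs, abs_of_pos (by positivity)]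
  -- the C*-estimate
  have hQd : ‖ι c‖ ≤ d := by
    have hιc : ι c = 1 - z⁻¹ • (star (ι a) * ι a) := by
      rw [hc_def, map_sub, map_one, map_smul, hp_def, map_mul, hstar]
    rw [hιc, hd_def]
    exact aux_cstar_bound (ι a) ha xinv hmulinv hinvmul hx0 hxinv0
  -- norm of powers in B
  have hQpow : ∀ n : ℕ, ‖ι (c ^ n)‖ ≤ d ^ n := by
    intro n
    rw [map_pow]
    calc ‖(ι c) ^ n‖ ≤ ‖ι c‖ ^ n := norm_pow_le _ n
      _ ≤ d ^ n := pow_le_pow_left₀ (norm_nonneg _) hQd n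
  -- set M
  have hM1 : 1 ≤ ‖a‖^2 / ‖ι a‖^2 := by
    rw [le_div_iff₀ (by positivity), one_mul]
    have := hcontr a
    nlinarith
  set g : ℕ → ℝ := fun k => 2 * (‖a‖^2 / ‖ι a‖^2) * (2*C)^k * d^(2^k - 1) with hg_def
  have hg0 : ∀ k, 0 ≤ g k := by
    intro k
    rw [hg_def]
    have : (0:ℝ) ≤ 2*C := by linarith
    positivity
  -- the inductive bound
  have hck : ∀ k : ℕ, ‖c ^ (2^k)‖ ≤ g k := by
    intro k
    induction k with
    | zero =>
      have hc1 : ‖c‖ ≤ 1 + ‖a‖^2 / ‖ι a‖^2 := by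
        rw [hc_def]
        calc ‖(1:A) - z⁻¹ • p‖ ≤ ‖(1:A)‖ + ‖z⁻¹ • p‖ := norm_sub_le _ _
          _ = 1 + ‖z‖⁻¹ * ‖p‖ := by rw [norm_one, norm_smul, norm_inv]
          _ ≤ 1 + ‖z‖⁻¹ * ‖a‖^2 := by
              have hpn : ‖p‖ ≤ ‖a‖^2 := by
                rw [hp_def, sq]
                calc ‖star a * a‖ ≤ ‖star a‖ * ‖a‖ := norm_mul_le _ _
                  _ = ‖a‖ * ‖a‖ := by rw [hstarnorm]
              have : (0:ℝ) ≤ ‖z‖⁻¹ := by positivity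
              nlinarith
          _ = 1 + ‖a‖^2 / ‖ι a‖^2 := by rw [hnormz, div_eq_inv_mul]
      simpa [hg_def] using hc1.trans (by linarith)
    | succ k ih =>
      have hsplit : c ^ (2^(k+1)) = c ^ (2^k) * c ^ (2^k) := by
        rw [← pow_add]
        congr 1
        ring
      have hstep : ‖c ^ (2^(k+1))‖ ≤ 2*C * ‖c ^ (2^k)‖ * ‖ι (c ^ (2^k))‖ := by
        rw [hsplit]
        have := hdiff (c ^ (2^k)) (c ^ (2^k))
        nlinarith [this]
      have h1 : ‖c ^ (2^(k+1))‖ ≤ 2*C * g k * d ^ (2^k) := by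
        have h2C : (0:ℝ) ≤ 2*C := by linarith
        have hb1 := hQpow (2^k)
        have hn1 := norm_nonneg (c ^ (2^k))
        have hn2 := norm_nonneg (ι (c ^ (2^k)))
        have hd2 : (0:ℝ) ≤ d ^ (2^k) := by positivity
        calc ‖c ^ (2^(k+1))‖ ≤ 2*C * ‖c ^ (2^k)‖ * ‖ι (c ^ (2^k))‖ := hstep
          _ ≤ 2*C * g k * d ^ (2^k) := by
              apply mul_le_mul
              · exact mul_le_mul_of_nonneg_left ih h2C
              · exact hb1
              · exact hn2
              · positivity
      calc ‖c ^ (2^(k+1))‖ ≤ 2*C * g k * d ^ (2^k) := h1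
        _ = g (k+1) := by
            rw [hg_def]
            simp only []
            have hexp : 2^(k+1) - 1 = (2^k - 1) + 2^k := by
              have : 1 ≤ 2^k := Nat.one_le_two_pow
              have h2 : (2:ℕ)^(k+1) = 2^k + 2^k := by ring
              omega
            rw [hexp, pow_add, pow_succ]
            ring
  -- summability of g
  have hgsum : Summable g := by
    apply summable_of_ratio_norm_eventually_le (r := 1/2) (by norm_num)
    have htend : Filter.Tendsto (fun k : ℕ => 2*C * d^k) Filter.atTop (nhds 0) := by
      have := tendsto_pow_atTop_nhds_zero_of_lt_one hd0 hd1
      simpa using this.const_mul (2*C)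
    have hev : ∀ᶠ k : ℕ in Filter.atTop, 2*C * d^k ≤ 1/2 := by
      have := htend.eventually_le_const (show (0:ℝ) < 1/2 by norm_num)
      filter_upwards [this] with k hk using hk
    filter_upwards [hev] with k hk
    have hgk : g (k+1) = (2*C * d^(2^k)) * g k := by
      rw [hg_def]
      simp only []
      have hexp : 2^(k+1) - 1 = (2^k - 1) + 2^k := by
        have : 1 ≤ 2^k := Nat.one_le_two_pow
        have h2 : (2:ℕ)^(k+1) = 2^k + 2^k := by ring
        omega
      rw [hexp, pow_add, pow_succ]
      ring
    have hdk : d^(2^k) ≤ d^k :=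
      pow_le_pow_of_le_one hd0 hd1.le (Nat.le_of_lt (Nat.lt_two_pow_self (n := k)))
    have hfin : 2*C * d^(2^k) ≤ 1/2 := by
      have h2C : (0:ℝ) ≤ 2*C := by linarith
      nlinarith
    rw [Real.norm_eq_abs, Real.norm_eq_abs, abs_of_nonneg (hg0 _), abs_of_nonneg (hg0 _), hgk]
    have hG := hg0 k
    have hDD : (0:ℝ) ≤ 2*C*d^(2^k) := by
      have : (0:ℝ) ≤ 2*C := by linarith
      positivity
    nlinarith
  -- logarithmic control of the infinite product
  have hw_pos : ∀ k, (0:ℝ) < 1 + g k := fun k => by have := hg0 k; linarith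
  have hlog_nonneg : ∀ k, 0 ≤ Real.log (1 + g k) := fun k =>
    Real.log_nonneg (by have := hg0 k; linarith)
  have hlogsum : Summable (fun k => Real.log (1 + g k)) := by
    refine Summable.of_nonneg_of_le hlog_nonneg (fun k => ?_) hgsum
    have := Real.log_le_sub_one_of_pos (hw_pos k)
    linarith
  set L : ℝ := ∑' k, Real.log (1 + g k) with hL_def
  -- each partial sum of the power norms is bounded by exp L
  have hnormsum_bound : ∀ m : ℕ, ∑ n ∈ Finset.range m, ‖c^n‖ ≤ Real.exp L := by
    intro m
    have s1 : ∑ n ∈ Finset.range m, ‖c^n‖ ≤ ∑ n ∈ Finset.range (2^m), ‖c^n‖ :=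
      Finset.sum_le_sum_of_subset_of_nonneg
        (Finset.range_subset_range.mpr (Nat.le_of_lt (Nat.lt_two_pow_self (n := m))))
        (fun _ _ _ => norm_nonneg _)
    have s2 := aux_sum_pow_le_prod c m
    have s3 : ∏ k ∈ Finset.range m, (1 + ‖c^(2^k)‖) ≤ ∏ k ∈ Finset.range m, (1 + g k) := by
      refine Finset.prod_le_prod (fun k _ => by positivity) (fun k _ => ?_)
      have := hck k
      linarith
    have s4 : ∏ k ∈ Finset.range m, (1 + g k) =
        Real.exp (∑ k ∈ Finset.range m, Real.log (1 + g k)) := by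
      rw [Real.exp_sum]
      refine Finset.prod_congr rfl (fun k _ => ?_)
      rw [Real.exp_log (hw_pos k)]
    have s5 : ∑ k ∈ Finset.range m, Real.log (1 + g k) ≤ L :=
      Summable.sum_le_tsum _ (fun k _ => hlog_nonneg k) hlogsum
    calc ∑ n ∈ Finset.range m, ‖c^n‖ ≤ ∑ n ∈ Finset.range (2^m), ‖c^n‖ := s1
      _ ≤ ∏ k ∈ Finset.range m, (1 + ‖c^(2^k)‖) := s2
      _ ≤ ∏ k ∈ Finset.range m, (1 + g k) := s3
      _ = Real.exp (∑ k ∈ Finset.range m, Real.log (1 + g k)) := s4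
      _ ≤ Real.exp L := Real.exp_le_exp.mpr s5
  -- the Neumann series
  have hsummable_norm : Summable (fun n => ‖c^n‖) :=
    summable_of_sum_range_le (fun n => norm_nonneg _) hnormsum_bound
  have hsummable : Summable (fun n => c^n) := Summable.of_norm hsummable_norm
  set s : A := ∑' n, c^n with hs_def
  have htsum_le : ∑' n, ‖c^n‖ ≤ Real.exp L :=
    Real.tsum_le_of_sum_range_le (fun n => norm_nonneg _) hnormsum_bound
  have hs_norm : ‖s‖ ≤ Real.exp L := (norm_tsum_le_tsum_norm hsummable_norm).trans htsum_le
  have hpow0 : Filter.Tendsto (fun n => c^n) Filter.atTop (nhds 0) := by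
    rw [tendsto_zero_iff_norm_tendsto_zero]
    exact hsummable_norm.tendsto_atTop_zero
  have hpartial : Filter.Tendsto (fun N => ∑ n ∈ Finset.range N, c^n)
      Filter.atTop (nhds s) := hsummable.hasSum.tendsto_sum_nat
  have h1 : Filter.Tendsto (fun N => (∑ n ∈ Finset.range N, c^n) * (1 - c))
      Filter.atTop (nhds (s * (1-c))) := hpartial.mul_const _
  have heqN : ∀ N : ℕ, (∑ n ∈ Finset.range N, c^n) * (1 - c) = 1 - c^N := by
    intro N
    calc (∑ n ∈ Finset.range N, c^n) * (1 - c)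
        = -((∑ n ∈ Finset.range N, c^n) * (c - 1)) := by noncomm_ring
      _ = -(c^N - 1) := by rw [geom_sum_mul]
      _ = 1 - c^N := neg_sub _ _
  have h2 : Filter.Tendsto (fun N : ℕ => 1 - c^N) Filter.atTop (nhds (s * (1-c))) :=
    h1.congr heqN
  have h3 : Filter.Tendsto (fun N : ℕ => 1 - c^N) Filter.atTop (nhds (1 - 0)) :=
    tendsto_const_nhds.sub hpow0
  have hneumann : s * (1 - c) = 1 := by
    have := tendsto_nhds_unique h2 h3
    rw [this, sub_zero]
  have honec : (1 : A) - c = z⁻¹ • p := by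
    rw [hc_def, sub_sub_cancel]
  -- the inverse in A
  refine ⟨z⁻¹ • (s * star a), ?_, ?_⟩
  · have hb : (z⁻¹ • (s * star a)) * a = s * (z⁻¹ • p) := by
      rw [smul_mul_assoc, mul_assoc, ← hp_def, mul_smul_comm]
    have hba : (z⁻¹ • (s * star a)) * a = 1 := by rw [hb, ← honec, hneumann]
    have hιb : ι (z⁻¹ • (s * star a)) * ι a = 1 := by
      rw [← map_mul, hba, map_one]
    obtain ⟨u, hu⟩ := ha
    rw [hxinv_def] at *
    rw [← hu, Ring.inverse_unit]
    refine (Units.inv_eq_of_mul_eq_one_left ?_).symm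
    rw [hu]
    exact hιb
  · -- the norm bound
    have hexp_eq : Real.exp L = ∏' k, (1 + g k) := by
      have := Real.rexp_tsum_eq_tprod (f := fun k => 1 + g k)
        (fun k => hw_pos k) hlogsum
      simpa using this
    have hιa2 : (0:ℝ) < ‖ι a‖^2 := by positivity
    calc ‖z⁻¹ • (s * star a)‖ = ‖z‖⁻¹ * ‖s * star a‖ := by rw [norm_smul, norm_inv]
      _ ≤ ‖z‖⁻¹ * (‖s‖ * ‖star a‖) := by
          have := norm_mul_le s (star a)
          have h0 : (0:ℝ) ≤ ‖z‖⁻¹ := by positivity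
          nlinarith
      _ = (‖ι a‖^2)⁻¹ * (‖s‖ * ‖a‖) := by rw [hnormz, hstarnorm]
      _ ≤ (‖ι a‖^2)⁻¹ * (Real.exp L * ‖a‖) := by
          have h0 : (0:ℝ) ≤ (‖ι a‖^2)⁻¹ := by positivity
          exact mul_le_mul_of_nonneg_left
            (mul_le_mul_of_nonneg_right hs_norm ha0.le) h0
      _ = ‖a‖ / ‖ι a‖^2 * Real.exp L := by ring
      _ = ‖a‖ / ‖ι a‖^2 * ∏' k, (1 + g k) := by rw [hexp_eq]
end

section
/- Let u ≥ 2, 0 < v < 1, c ≥ 1, set ξ = log₂(ln u / ln(1/v)) and assume ξ ≥ 4, and let K = (ln 2 − 1/2)⁻¹. If M ∈ ℕ satisfies M ≥ ξ + 1 and 2^M ln(1/v) − M ln u ≥ ln(Kc), then ∏_{k=M+1}^∞ (1 + c u^k v^{2^k}) ≤ e. -/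
private lemma aux_tprod (x : ℕ → ℝ) (hpos : ∀ k, 0 < x k) (hsum : Summable x)
    (h1 : ∑' k, x k ≤ 1) :
    Multipliable (fun k => 1 + x k) ∧ ∏' k : ℕ, (1 + x k) ≤ Real.exp 1 := by
  have hlog_le : ∀ k, Real.log (1 + x k) ≤ x k := fun k => by
    have := Real.log_le_sub_one_of_pos (show (0:ℝ) < 1 + x k by linarith [hpos k])
    linarith
  have hlogsum : Summable (fun k => Real.log (1 + x k)) :=
    Summable.of_nonneg_of_le (fun k => Real.log_nonneg (by linarith [hpos k])) hlog_le hsum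
  have hfn : ∀ (a : Unit) (n : ℕ), 0 < (fun n (_ : Unit) => 1 + x n) n a :=
    fun _ n => by simpa using by linarith [hpos n]
  have hm : Multipliable (fun k => 1 + x k) :=
    Real.multipliable_of_summable_log (f := fun n => 1 + x n) (fun n => hfn () n) hlogsum
  refine ⟨hm, ?_⟩
  have heq := (Real.rexp_tsum_eq_tprod (f := fun n => 1 + x n) (fun n => hfn () n)
    hlogsum)
  rw [← heq]
  apply Real.exp_le_exp.2
  calc ∑' k, Real.log (1 + x k) ≤ ∑' k, x k := Summable.tsum_le_tsum hlog_le hlogsum hsum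
    _ ≤ 1 := h1

/-- Tail estimate: for `u ≥ 2`, `0 < v < 1`, `c ≥ 1`, `ξ = log₂(ln u/ln(1/v)) ≥ 4`,
`K = (ln 2 − 1/2)⁻¹`, if `M ≥ ξ + 1` and `2^M ln(1/v) − M ln u ≥ ln(Kc)`, then
`∏_{k=M+1}^∞ (1 + c u^k v^{2^k}) ≤ e`. -/
theorem stmt_14 (u v c : ℝ) (M : ℕ) (hu : 2 ≤ u) (hv0 : 0 < v) (hv1 : v < 1)
    (hc : 1 ≤ c)
    (hξ : 4 ≤ Real.logb 2 (Real.log u / Real.log v⁻¹))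
    (hM1 : Real.logb 2 (Real.log u / Real.log v⁻¹) + 1 ≤ (M : ℝ))
    (hM2 : Real.log ((Real.log 2 - 1 / 2)⁻¹ * c) ≤
      (2 : ℝ) ^ M * Real.log v⁻¹ - (M : ℝ) * Real.log u) :
    Multipliable (fun k : ℕ => 1 + c * u ^ (M + 1 + k) * v ^ (2 ^ (M + 1 + k))) ∧
    ∏' k : ℕ, (1 + c * u ^ (M + 1 + k) * v ^ (2 ^ (M + 1 + k))) ≤ Real.exp 1 := by
  have hu0 : (0:ℝ) < u := by linarith
  have hL : 0 < Real.log v⁻¹ := Real.log_pos (one_lt_inv_iff₀.2 ⟨hv0, hv1⟩)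
  set L := Real.log v⁻¹ with hLdef
  have hlv : Real.log v = -L := by rw [hLdef, Real.log_inv]; ring
  have hlu : 0 < Real.log u := Real.log_pos (by linarith)
  have hl2 : Real.log 2 ≤ Real.log u := Real.log_le_log (by norm_num) hu
  have hlog2 : (0.6931471803:ℝ) < Real.log 2 := Real.log_two_gt_d9
  have hlog2' : Real.log 2 < 0.6931471808 := Real.log_two_lt_d9
  have hKpos : (0:ℝ) < Real.log 2 - 1/2 := by linarith
  have hratio : 0 < Real.log u / L := div_pos hlu hL
  -- 2 * log u ≤ 2^M * L
  have h2M : 2 * Real.log u ≤ (2:ℝ) ^ M * L := by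
    have h1 : (2:ℝ) ^ (Real.logb 2 (Real.log u / L) + 1) ≤ (2:ℝ) ^ ((M:ℝ)) :=
      Real.rpow_le_rpow_of_exponent_le (by norm_num) hM1
    rw [Real.rpow_add (by norm_num), Real.rpow_logb (by norm_num) (by norm_num) hratio,
      Real.rpow_one, Real.rpow_natCast] at h1
    have h2 := mul_le_mul_of_nonneg_right h1 hL.le
    rw [mul_right_comm, div_mul_cancel₀ _ hL.ne'] at h2
    linarith
  -- key1 : c * u^M * v^(2^M) ≤ log 2 - 1/2
  have hvpow : ∀ n : ℕ, (0:ℝ) < v ^ n := fun n => pow_pos hv0 n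
  have hlogP : Real.log (c * u ^ M * v ^ (2 ^ M)) =
      Real.log c + M * Real.log u - (2:ℝ) ^ M * L := by
    rw [Real.log_mul (by positivity) (by positivity),
      Real.log_mul (by positivity) (by positivity), Real.log_pow, Real.log_pow, hlv]
    push_cast
    ring
  have key1 : c * u ^ M * v ^ (2 ^ M) ≤ Real.log 2 - 1/2 := by
    have hKc : Real.log ((Real.log 2 - 1/2)⁻¹ * c) =
        -Real.log (Real.log 2 - 1/2) + Real.log c := by
      rw [Real.log_mul (by positivity) (by positivity), Real.log_inv]
    rw [hKc] at hM2
    have hle : Real.log (c * u ^ M * v ^ (2 ^ M)) ≤ Real.log (Real.log 2 - 1/2) := by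
      rw [hlogP]; linarith
    exact (Real.log_le_log_iff (by positivity) hKpos).1 hle
  -- key2 : u * v^(2^M) ≤ 1/2
  have key2 : u * v ^ (2 ^ M) ≤ 1/2 := by
    have hle : Real.log (u * v ^ (2 ^ M)) ≤ Real.log (1/2) := by
      rw [Real.log_mul (by positivity) (by positivity), Real.log_pow, hlv,
        show (1/2:ℝ) = 2⁻¹ by norm_num, Real.log_inv]
      push_cast
      linarith
    exact (Real.log_le_log_iff (by positivity) (by norm_num)).1 hle
  -- key3 : ∀ k, u * v^(2^(M+1+k)) ≤ 1/8
  have key3 : ∀ k : ℕ, u * v ^ (2 ^ (M + 1 + k)) ≤ 1/8 := by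
    intro k
    have hmono : v ^ (2 ^ (M + 1 + k)) ≤ v ^ (2 ^ (M + 1)) :=
      pow_le_pow_of_le_one hv0.le hv1.le (Nat.pow_le_pow_right (by norm_num) (by omega))
    have h2 : u * v ^ (2 ^ (M + 1)) ≤ 1/8 := by
      have hle : Real.log (u * v ^ (2 ^ (M + 1))) ≤ Real.log (1/8) := by
        rw [Real.log_mul (by positivity) (by positivity), Real.log_pow, hlv,
          show (1/8:ℝ) = ((2:ℝ)^(3:ℕ))⁻¹ by norm_num, Real.log_inv, Real.log_pow]
        push_cast
        have : ((2:ℝ) ^ (M+1)) = 2 * (2:ℝ) ^ M := by ring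
        rw [this]
        push_cast
        linarith
      exact (Real.log_le_log_iff (by positivity) (by norm_num)).1 hle
    calc u * v ^ (2 ^ (M + 1 + k)) ≤ u * v ^ (2 ^ (M + 1)) := by
          exact mul_le_mul_of_nonneg_left hmono hu0.le
      _ ≤ 1/8 := h2
  -- the terms
  set x : ℕ → ℝ := fun k => c * u ^ (M + 1 + k) * v ^ (2 ^ (M + 1 + k)) with hxdef
  have hxpos : ∀ k, 0 < x k := fun k => by
    simp only [hxdef]; positivity
  have hx0 : x 0 ≤ (Real.log 2 - 1/2) / 2 := by
    have hx0eq : x 0 = (c * u ^ M * v ^ (2 ^ M)) * (u * v ^ (2 ^ M)) := by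
      simp only [hxdef]
      rw [show M + 1 + 0 = M + 1 from rfl, pow_succ u M,
        show 2 ^ (M + 1) = 2 ^ M + 2 ^ M by ring, pow_add]
      ring
    rw [hx0eq]
    calc (c * u ^ M * v ^ (2 ^ M)) * (u * v ^ (2 ^ M))
        ≤ (Real.log 2 - 1/2) * (1/2) :=
          mul_le_mul key1 key2 (by positivity) hKpos.le
      _ = (Real.log 2 - 1/2) / 2 := by ring
  have hrec : ∀ k, x (k + 1) = x k * (u * v ^ (2 ^ (M + 1 + k))) := by
    intro k
    simp only [hxdef]
    rw [show M + 1 + (k + 1) = (M + 1 + k) + 1 from rfl, pow_succ u,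
      show 2 ^ ((M + 1 + k) + 1) = 2 ^ (M + 1 + k) + 2 ^ (M + 1 + k) by ring, pow_add]
    ring
  have hgeo : ∀ k, x k ≤ x 0 * (1/8 : ℝ) ^ k := by
    intro k
    induction k with
    | zero => simp
    | succ n ih =>
      rw [hrec n]
      calc x n * (u * v ^ (2 ^ (M + 1 + n)))
          ≤ (x 0 * (1/8:ℝ) ^ n) * (1/8) :=
            mul_le_mul ih (key3 n) (by positivity) (by positivity)
        _ = x 0 * (1/8:ℝ) ^ (n + 1) := by ring
  have hgeosum : Summable (fun k : ℕ => x 0 * (1/8 : ℝ) ^ k) :=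
    (summable_geometric_of_lt_one (by norm_num) (by norm_num)).mul_left _
  have hsum : Summable x :=
    Summable.of_nonneg_of_le (fun k => (hxpos k).le) hgeo hgeosum
  have htsum : ∑' k, x k ≤ 1 := by
    have t1 : ∑' k, x k ≤ x 0 * (8/7 : ℝ) := by
      calc ∑' k, x k ≤ ∑' k : ℕ, x 0 * (1/8:ℝ) ^ k := Summable.tsum_le_tsum hgeo hsum hgeosum
        _ = x 0 * (1 - 1/8)⁻¹ := by
            rw [tsum_mul_left, tsum_geometric_of_lt_one (by norm_num) (by norm_num)]
        _ = x 0 * (8/7) := by norm_num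
    have hx0' : x 0 ≤ (1:ℝ)/10 := by linarith
    linarith
  exact aux_tprod x hxpos hsum htsum
end

section
/- Let 𝒜 ⊆ ℬ be unital Banach algebras with common unit and with a differential norm ‖ab‖_𝒜 ≤ C(‖a‖_𝒜‖b‖_ℬ + ‖b‖_𝒜‖a‖_ℬ), and assume ℬ is a unital C*-algebra and 𝒜 is a *-subalgebra. If a ∈ 𝒜 is invertible in ℬ, then a⁻¹ ∈ 𝒜 (inverse-closedness of differential subalgebras of C*-algebras). -/
open scoped ENNReal Pointwise

/-- If `1 - c ^ n` is a unit, then so is `1 - c`. -/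
lemma aux_isUnit_one_sub {R : Type*} [Ring R] {c : R} {n : ℕ} (h : IsUnit (1 - c ^ n)) :
    IsUnit (1 - c) := by
  obtain ⟨u, hu⟩ := h
  set s : R := ∑ i ∈ Finset.range n, c ^ i with hs
  have h1 : (1 - c) * s = 1 - c ^ n := by
    rw [← neg_sub c 1, neg_mul, hs, mul_geom_sum, neg_sub]
  have h2 : s * (1 - c) = 1 - c ^ n := by
    rw [← neg_sub c 1, mul_neg, hs, geom_sum_mul, neg_sub]
  have hc : Commute (1 - c) ((u : R)) := by
    rw [hu]
    exact Commute.sub_right (Commute.one_right _)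
      (Commute.pow_right (Commute.sub_left (Commute.one_left c) (Commute.refl c)) n)
  have hcinv : Commute (1 - c) ((↑u⁻¹ : R)) := hc.units_inv_right
  refine isUnit_iff_exists.mpr ⟨s * ↑u⁻¹, ?_, ?_⟩
  · rw [← mul_assoc, h1, ← hu, Units.mul_inv]
  · calc s * ↑u⁻¹ * (1 - c) = s * (↑u⁻¹ * (1 - c)) := by rw [mul_assoc]
      _ = s * ((1 - c) * ↑u⁻¹) := by rw [hcinv.eq]
      _ = (s * (1 - c)) * ↑u⁻¹ := by rw [mul_assoc]
      _ = ↑u * ↑u⁻¹ := by rw [h2, hu]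
      _ = 1 := Units.mul_inv u

/-- If `‖c^(2n)‖ ≤ K δ^n ‖c^n‖` with `δ < 1`, some power of `c` has norm `< 1`. -/
lemma aux_exists_pow_norm_lt_one {A : Type*} [NormedRing A] (c : A) {δ K : ℝ}
    (hδ0 : 0 ≤ δ) (hδ1 : δ < 1) (hK : 1 ≤ K)
    (h : ∀ n : ℕ, ‖c ^ (2 * n)‖ ≤ K * (δ ^ n * ‖c ^ n‖)) :
    ∃ n : ℕ, 0 < n ∧ ‖c ^ n‖ < 1 := by
  have hKpos : (0 : ℝ) < K := lt_of_lt_of_le one_pos hK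
  obtain ⟨m₀, hm₀⟩ := exists_pow_lt_of_lt_one (show (0 : ℝ) < 1 / (2 * K) by positivity) hδ1
  set m : ℕ := m₀ + 1 with hm
  have hδm : K * δ ^ m ≤ 1 / 2 := by
    have h1 : δ ^ m ≤ δ ^ m₀ := pow_le_pow_of_le_one hδ0 hδ1.le (Nat.le_succ m₀)
    calc K * δ ^ m ≤ K * δ ^ m₀ := by nlinarith
      _ ≤ K * (1 / (2 * K)) := by nlinarith
      _ = 1 / 2 := by field_simp
  have hstep : ∀ k : ℕ, ‖c ^ (m * 2 ^ (k + 1))‖ ≤ (1 / 2) * ‖c ^ (m * 2 ^ k)‖ := by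
    intro k
    have h2 : m * 2 ^ (k + 1) = 2 * (m * 2 ^ k) := by ring
    have h4 : δ ^ (m * 2 ^ k) ≤ δ ^ m :=
      pow_le_pow_of_le_one hδ0 hδ1.le (Nat.le_mul_of_pos_right m (by positivity))
    rw [h2]
    calc ‖c ^ (2 * (m * 2 ^ k))‖ ≤ K * (δ ^ (m * 2 ^ k) * ‖c ^ (m * 2 ^ k)‖) := h _
      _ ≤ K * (δ ^ m * ‖c ^ (m * 2 ^ k)‖) :=
          mul_le_mul_of_nonneg_left
            (mul_le_mul_of_nonneg_right h4 (norm_nonneg _)) hKpos.le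
      _ = (K * δ ^ m) * ‖c ^ (m * 2 ^ k)‖ := by ring
      _ ≤ (1 / 2) * ‖c ^ (m * 2 ^ k)‖ :=
          mul_le_mul_of_nonneg_right hδm (norm_nonneg _)
  have hiter : ∀ k : ℕ, ‖c ^ (m * 2 ^ k)‖ ≤ (1 / 2) ^ k * ‖c ^ m‖ := by
    intro k
    induction k with
    | zero => simp
    | succ k ih =>
        calc ‖c ^ (m * 2 ^ (k + 1))‖ ≤ (1 / 2) * ‖c ^ (m * 2 ^ k)‖ := hstep k
          _ ≤ (1 / 2) * ((1 / 2) ^ k * ‖c ^ m‖) := by nlinarith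
          _ = (1 / 2) ^ (k + 1) * ‖c ^ m‖ := by ring
  obtain ⟨k, hk⟩ := exists_pow_lt_of_lt_one
    (show (0 : ℝ) < 1 / (‖c ^ m‖ + 1) by positivity) (by norm_num : (1 : ℝ) / 2 < 1)
  refine ⟨m * 2 ^ k, by positivity, ?_⟩
  have h5 := hiter k
  have h6 : (0 : ℝ) < ‖c ^ m‖ + 1 := by positivity
  have h7 : ((1 : ℝ) / 2) ^ k * (‖c ^ m‖ + 1) < 1 := by
    rw [lt_div_iff₀ h6] at hk
    linarith [hk]
  nlinarith [norm_nonneg (c ^ m), pow_nonneg (show (0:ℝ) ≤ 1/2 by norm_num) k]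

/-- Key lemma: if `ι b = star y * y` is a unit in `B`, then `b` is a unit in `A`. -/
lemma aux_key {A B : Type*} [NormedRing A] [NormedAlgebra ℂ A] [CompleteSpace A]
    [StarRing A] [NormOneClass A]
    [NormedRing B] [StarRing B] [CStarRing B] [NormedAlgebra ℂ B] [CompleteSpace B]
    [StarModule ℂ B] [Nontrivial B]
    (ι : A →ₐ[ℂ] B)
    (C : ℝ)
    (hdiff : ∀ x y : A, ‖x * y‖ ≤ C * (‖x‖ * ‖ι y‖ + ‖y‖ * ‖ι x‖))
    (b : A) (y : B) (hy : ι b = star y * y) (hb : IsUnit (ι b)) :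
    IsUnit b := by
  letI : CStarAlgebra B := { }
  have hx_sa : IsSelfAdjoint (ι b) := hy ▸ IsSelfAdjoint.star_mul_self y
  have hx0 : ι b ≠ 0 := hb.ne_zero
  set t : ℝ := ‖ι b‖ with ht_def
  have ht : 0 < t := norm_pos_iff.mpr hx0
  have hspec_real : ∀ z ∈ spectrum ℂ (ι b), z = (z.re : ℂ) := fun z hz =>
    hx_sa.mem_spectrum_eq_re hz
  have hspec_nonneg : ∀ z ∈ spectrum ℂ (ι b), 0 ≤ z.re := by
    intro z hz
    have hz' : ((z.re : ℝ) : ℂ) ∈ spectrum ℂ (ι b) := (hspec_real z hz) ▸ hz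
    have hz'' : z.re ∈ spectrum ℝ (ι b) := by
      rw [← spectrum.algebraMap_mem_iff ℂ]
      exact hz'
    rw [hy] at hz''
    exact spectrum_star_mul_self_nonneg z.re hz''
  obtain ⟨z₀, hz₀mem, hz₀min⟩ := (spectrum.isCompact (ι b)).exists_isMinOn
    (spectrum.nonempty (ι b)) (Complex.continuous_re.continuousOn)
  set ε : ℝ := z₀.re with hε_def
  have hε0 : 0 < ε := by
    rcases (hspec_nonneg z₀ hz₀mem).lt_or_eq with h | h
    · exact h
    · exfalso
      have hz₀0 : z₀ = 0 := by
        rw [hspec_real z₀ hz₀mem, ← h]; simp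
      exact (spectrum.zero_notMem_iff ℂ).mpr hb (hz₀0 ▸ hz₀mem)
  have hεt : ε ≤ t := le_trans (Complex.re_le_norm z₀)
    (spectrum.norm_le_norm_of_mem hz₀mem)
  set c : A := 1 - ((t : ℂ))⁻¹ • b with hc_def
  have hic : ι c = 1 - ((t : ℂ))⁻¹ • ι b := by
    rw [hc_def]; simp
  have hcsa : IsSelfAdjoint (ι c) := by
    rw [hic]
    refine (IsSelfAdjoint.one (R := B)).sub (IsSelfAdjoint.smul ?_ hx_sa)
    rw [IsSelfAdjoint, ← Complex.ofReal_inv, Complex.star_def, Complex.conj_ofReal]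
  -- bound every spectral value of `ι c`
  have hspec_c : ∀ μ ∈ spectrum ℂ (ι c), ‖μ‖ ≤ 1 - ε / t := by
    intro μ hμ
    rw [hic] at hμ
    have hμ2 : μ ∈ ({(1 : ℂ)} : Set ℂ) - spectrum ℂ (((t : ℂ))⁻¹ • ι b) := by
      rw [spectrum.singleton_sub_eq, map_one]
      exact hμ
    rw [spectrum.smul_eq_smul _ _ (spectrum.nonempty (ι b))] at hμ2
    obtain ⟨x, hx, w, hw, hxw⟩ := Set.mem_sub.mp hμ2
    obtain ⟨z, hz, hzw⟩ := hw
    rw [Set.mem_singleton_iff] at hx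
    have hμ_eq : μ = 1 - ((t : ℂ))⁻¹ * z := by
      rw [← hxw, hx, ← hzw]; rfl
    have hz_re : z = (z.re : ℂ) := hspec_real z hz
    have hzret : z.re ≤ t := le_trans (Complex.re_le_norm z)
      (spectrum.norm_le_norm_of_mem hz)
    have hzreε : ε ≤ z.re := hz₀min hz
    have hμ_real : μ = ((1 - z.re / t : ℝ) : ℂ) := by
      rw [hμ_eq, hz_re]
      push_cast
      field_simp
      simp
    rw [hμ_real, Complex.norm_real, Real.norm_eq_abs,
      abs_of_nonneg (by rw [sub_nonneg, div_le_one ht]; exact hzret)]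
    gcongr
  -- hence the norm of `ι c` is < 1
  have hδlt : ‖ι c‖ < 1 := by
    have h1 : spectralRadius ℂ (ι c) = (‖ι c‖₊ : ℝ≥0∞) := hcsa.spectralRadius_eq_nnnorm
    have h2 : spectralRadius ℂ (ι c) ≤ ENNReal.ofReal (1 - ε / t) := by
      rw [spectralRadius]
      refine iSup₂_le fun μ hμ => ?_
      rw [← ENNReal.ofReal_coe_nnreal, coe_nnnorm]
      exact ENNReal.ofReal_le_ofReal (hspec_c μ hμ)
    rw [h1] at h2
    have h3 : ‖ι c‖ ≤ 1 - ε / t := by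
      have h4 := ENNReal.toReal_mono (by simp) h2
      rw [ENNReal.coe_toReal, coe_nnnorm, ENNReal.toReal_ofReal
        (by rw [sub_nonneg, div_le_one ht]; exact hεt)] at h4
      exact h4
    have h5 : 0 < ε / t := div_pos hε0 ht
    linarith
  -- Brandenburg/Neumann argument in `A`
  set δ : ℝ := ‖ι c‖ with hδ_def
  have hδ0 : 0 ≤ δ := norm_nonneg _
  set K : ℝ := max (2 * C) 1 with hK_def
  have hpow : ∀ n : ℕ, ‖c ^ (2 * n)‖ ≤ K * (δ ^ n * ‖c ^ n‖) := by
    intro n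
    have h1 : c ^ (2 * n) = c ^ n * c ^ n := by rw [two_mul, pow_add]
    have h2 : ‖ι (c ^ n)‖ ≤ δ ^ n := by
      rw [map_pow]; exact norm_pow_le _ _
    have h3 : (0 : ℝ) ≤ ‖c ^ n‖ := norm_nonneg _
    calc ‖c ^ (2 * n)‖ = ‖c ^ n * c ^ n‖ := by rw [h1]
      _ ≤ C * (‖c ^ n‖ * ‖ι (c ^ n)‖ + ‖c ^ n‖ * ‖ι (c ^ n)‖) := hdiff _ _
      _ = (2 * C) * (‖ι (c ^ n)‖ * ‖c ^ n‖) := by ring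
      _ ≤ K * (‖ι (c ^ n)‖ * ‖c ^ n‖) :=
          mul_le_mul_of_nonneg_right (le_max_left _ _)
            (mul_nonneg (norm_nonneg _) h3)
      _ ≤ K * (δ ^ n * ‖c ^ n‖) := by
          have hK1 : (0 : ℝ) ≤ K := le_trans zero_le_one (le_max_right _ _)
          exact mul_le_mul_of_nonneg_left (mul_le_mul_of_nonneg_right h2 h3) hK1
  obtain ⟨n, hn, hnorm⟩ := aux_exists_pow_norm_lt_one c hδ0 hδlt (le_max_right _ _) hpow
  have hu1 : IsUnit ((1 : A) - c ^ n) := (Units.oneSub (c ^ n) hnorm).isUnit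
  have hu2 : IsUnit ((1 : A) - c) := aux_isUnit_one_sub hu1
  have h5 : (1 : A) - c = ((t : ℂ))⁻¹ • b := by rw [hc_def, sub_sub_cancel]
  rw [h5] at hu2
  have htne : ((t : ℂ))⁻¹ ≠ 0 := by
    simp only [ne_eq, inv_eq_zero, Complex.ofReal_eq_zero]
    exact ht.ne'
  have h7 : IsUnit (((t : ℂ))⁻¹ • (1 : A)) := by
    rw [← Algebra.algebraMap_eq_smul_one]
    exact (isUnit_iff_ne_zero.mpr htne).map (algebraMap ℂ A)
  have h6 : ((t : ℂ))⁻¹ • b = (((t : ℂ))⁻¹ • (1 : A)) * b := by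
    rw [smul_mul_assoc, one_mul]
  rw [h6, ← h7.unit_spec] at hu2
  exact (Units.isUnit_units_mul h7.unit b).mp hu2

/-- Inverse-closedness of differential subalgebras of C*-algebras: if the Banach
`*`-algebra `𝒜` embeds (via an injective unit- and star-preserving algebra homomorphism
`ι` with `‖ι a‖ ≤ ‖a‖`) into a unital C*-algebra `ℬ` and carries a differential norm
`‖ab‖_𝒜 ≤ C(‖a‖_𝒜‖b‖_ℬ + ‖b‖_𝒜‖a‖_ℬ)`, then any `a ∈ 𝒜` invertible in `ℬ` is
invertible in `𝒜`. -/
theorem stmt_16 {A B : Type*} [NormedRing A] [NormedAlgebra ℂ A] [CompleteSpace A]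
    [StarRing A] [NormOneClass A]
    [NormedRing B] [StarRing B] [CStarRing B] [NormedAlgebra ℂ B] [CompleteSpace B]
    [StarModule ℂ B] [Nontrivial B]
    (ι : A →ₐ[ℂ] B) (hinj : Function.Injective ι)
    (hstar : ∀ x : A, ι (star x) = star (ι x))
    (hemb : ∀ x : A, ‖ι x‖ ≤ ‖x‖)
    (C : ℝ)
    (hdiff : ∀ x y : A, ‖x * y‖ ≤ C * (‖x‖ * ‖ι y‖ + ‖y‖ * ‖ι x‖))
    (a : A) (ha : IsUnit (ι a)) :
    IsUnit a := by
  have h1 : IsUnit (star a * a) :=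
    aux_key ι C hdiff (star a * a) (ι a)
      (by rw [map_mul, hstar])
      (by rw [map_mul, hstar]; exact ha.star.mul ha)
  have h2 : IsUnit (a * star a) :=
    aux_key ι C hdiff (a * star a) (star (ι a))
      (by rw [map_mul, hstar, star_star])
      (by rw [map_mul, hstar]; exact ha.mul ha.star)
  obtain ⟨u, hu⟩ := h1
  obtain ⟨v, hv⟩ := h2
  have hxa : (↑u⁻¹ * star a) * a = 1 := by
    rw [mul_assoc, ← hu, Units.inv_mul]
  have hay : a * (star a * ↑v⁻¹) = 1 := by
    rw [← mul_assoc, ← hv, Units.mul_inv]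
  have hxy : (↑u⁻¹ * star a : A) = star a * ↑v⁻¹ := by
    calc (↑u⁻¹ * star a : A) = (↑u⁻¹ * star a) * (a * (star a * ↑v⁻¹)) := by rw [hay, mul_one]
      _ = ((↑u⁻¹ * star a) * a) * (star a * ↑v⁻¹) := by simp only [mul_assoc]
      _ = star a * ↑v⁻¹ := by rw [hxa, one_mul]
  exact isUnit_iff_exists.mpr ⟨↑u⁻¹ * star a, by rw [hxy]; exact hay, hxa⟩
end

section
/- Let u ≥ 2, 0 < v < 1, c ≥ 1 with ξ = log₂(ln u/ln(1/v)) ≥ 4, K = (ln 2 − 1/2)⁻¹, and suppose Kc ≥ u^ξ, and let M ∈ ℕ with M + 1 ≤ 2 ln(Kc)/ln u. Then (1 + c u^ξ)^{M+1} ≤ e · exp( (8 ln²K)/ln u ) · exp( (8/ln u) · ln²c ). -/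
private lemma aux_two_log_le (t : ℝ) (ht : (5 : ℝ) ≤ t) :
    2 * Real.log t ≤ Real.log 2 * t := by
  have hl2a : (0.6931471803 : ℝ) < Real.log 2 := Real.log_two_gt_d9
  have hegt : (2.7182818283 : ℝ) < Real.exp 1 := Real.exp_one_gt_d9
  have ht0 : (0 : ℝ) < t := by linarith
  have hs0 : 0 < Real.sqrt t := Real.sqrt_pos.mpr ht0
  have hs2 : Real.sqrt t * Real.sqrt t = t := Real.mul_self_sqrt ht0.le
  have hlogt : Real.log t = 2 * Real.log (Real.sqrt t) := by
    rw [Real.log_sqrt ht0.le]; ring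
  have hloge : Real.exp 1 * Real.log (Real.sqrt t) ≤ Real.sqrt t := by
    have h := Real.log_le_sub_one_of_pos (show (0:ℝ) < Real.sqrt t / Real.exp 1 by positivity)
    rw [Real.log_div hs0.ne' (Real.exp_pos 1).ne', Real.log_exp] at h
    have h2 : Real.log (Real.sqrt t) ≤ Real.sqrt t / Real.exp 1 := by linarith
    calc Real.exp 1 * Real.log (Real.sqrt t) ≤ Real.exp 1 * (Real.sqrt t / Real.exp 1) :=
          mul_le_mul_of_nonneg_left h2 (Real.exp_pos 1).le
      _ = Real.sqrt t := by field_simp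
  have hs' : (2.2 : ℝ) ≤ Real.sqrt t := by nlinarith
  have hA : (1.88 : ℝ) ≤ Real.log 2 * Real.exp 1 := by nlinarith
  have h51 : 4 * Real.sqrt t ≤ 1.88 * (Real.sqrt t * Real.sqrt t) := by
    nlinarith [mul_le_mul_of_nonneg_left hs' hs0.le]
  have h52 : 1.88 * (Real.sqrt t * Real.sqrt t) ≤
      (Real.log 2 * Real.exp 1) * (Real.sqrt t * Real.sqrt t) :=
    mul_le_mul_of_nonneg_right hA (mul_nonneg hs0.le hs0.le)
  have big : Real.exp 1 * (4 * Real.log (Real.sqrt t)) ≤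
      Real.exp 1 * (Real.log 2 * (Real.sqrt t * Real.sqrt t)) := by nlinarith
  have hfin : 4 * Real.log (Real.sqrt t) ≤ Real.log 2 * (Real.sqrt t * Real.sqrt t) :=
    le_of_mul_le_mul_left big (Real.exp_pos 1)
  calc 2 * Real.log t = 4 * Real.log (Real.sqrt t) := by rw [hlogt]; ring
    _ ≤ Real.log 2 * (Real.sqrt t * Real.sqrt t) := hfin
    _ = Real.log 2 * t := by rw [hs2]

set_option maxHeartbeats 1600000 in
/-- Case 2 of the finite-product estimate: for `u ≥ 2`, `0 < v < 1`, `c ≥ 1`,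
`ξ = log₂(ln u/ln(1/v)) ≥ 4`, `K = (ln 2 − 1/2)⁻¹`, if `Kc ≥ u^ξ` and
`M + 1 ≤ 2 ln(Kc)/ln u`, then
`(1 + c u^ξ)^{M+1} ≤ e · exp(8 ln²K/ln u) · exp((8/ln u) ln²c)`. -/
theorem stmt_19 (u v c : ℝ) (M : ℕ) (hu : 2 ≤ u) (hv0 : 0 < v) (hv1 : v < 1)
    (hc : 1 ≤ c)
    (hξ : 4 ≤ Real.logb 2 (Real.log u / Real.log v⁻¹))
    (hK : u ^ (Real.logb 2 (Real.log u / Real.log v⁻¹)) ≤ (Real.log 2 - 1 / 2)⁻¹ * c)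
    (hM : (M : ℝ) + 1 ≤ 2 * Real.log ((Real.log 2 - 1 / 2)⁻¹ * c) / Real.log u) :
    (1 + c * u ^ (Real.logb 2 (Real.log u / Real.log v⁻¹))) ^ (M + 1) ≤
      Real.exp 1 * Real.exp (8 * (Real.log (Real.log 2 - 1 / 2)⁻¹) ^ 2 / Real.log u) *
        Real.exp ((8 / Real.log u) * (Real.log c) ^ 2) := by
  set ξ := Real.logb 2 (Real.log u / Real.log v⁻¹) with hξdef
  set K := (Real.log 2 - 1 / 2)⁻¹ with hKdef
  clear_value ξ K
  have hl2a : (0.6931471803 : ℝ) < Real.log 2 := Real.log_two_gt_d9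
  have hl2b : Real.log 2 < 0.6931471808 := Real.log_two_lt_d9
  have hd : 0 < Real.log 2 - 1 / 2 := by linarith
  have hKpos : 0 < K := by rw [hKdef]; exact inv_pos.mpr hd
  have hKmul : K * (Real.log 2 - 1 / 2) = 1 := by rw [hKdef]; exact inv_mul_cancel₀ hd.ne'
  have hK5 : (5 : ℝ) ≤ K := by nlinarith
  have hc0 : (0 : ℝ) < c := by linarith
  have hlnu : Real.log 2 ≤ Real.log u := Real.log_le_log (by norm_num) hu
  have hlnupos : (0 : ℝ) < Real.log u := by linarith
  have hApos : 0 < u ^ ξ := Real.rpow_pos_of_pos (by linarith) ξ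
  have hcA : c * u ^ ξ ≤ K * c ^ 2 := by nlinarith [mul_le_mul_of_nonneg_left hK (le_of_lt hc0)]
  have hSpos : (0 : ℝ) < 1 + K * c ^ 2 := by nlinarith
  have h1 : (1 + c * u ^ ξ) ^ (M + 1) ≤ (1 + K * c ^ 2) ^ (M + 1) := by
    apply pow_le_pow_left₀ (by positivity) (by linarith)
  have hKc2pos : (0 : ℝ) < K * c ^ 2 := by positivity
  have hKc2ge : (5 : ℝ) ≤ K * c ^ 2 := by nlinarith
  -- abbreviations
  set a := Real.log K with hadef
  set b := Real.log c with hbdef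
  clear_value a b
  have ha0 : 0 ≤ a := by rw [hadef]; exact Real.log_nonneg (by linarith)
  have hb0 : 0 ≤ b := by rw [hbdef]; exact Real.log_nonneg hc
  have hlnt : Real.log (K * c) = a + b := by rw [hadef, hbdef]; exact Real.log_mul hKpos.ne' hc0.ne'
  have hlnKc2 : Real.log (K * c ^ 2) = a + 2 * b := by
    rw [Real.log_mul hKpos.ne' (by positivity), Real.log_pow, hadef, hbdef]
    push_cast; ring
  set L := 2 * Real.log (K * c) / Real.log u with hLdef
  clear_value L
  have hL0 : 0 ≤ L := by
    rw [hLdef]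
    apply div_nonneg _ hlnupos.le
    rw [hlnt]; linarith
  -- split the log
  have hsplit : Real.log (1 + K * c ^ 2) ≤ Real.log (K * c ^ 2) + (K * c ^ 2)⁻¹ := by
    have : (1 + K * c ^ 2) = (K * c ^ 2) * (1 + (K * c ^ 2)⁻¹) := by
      field_simp
      ring
    rw [this, Real.log_mul hKc2pos.ne' (by positivity)]
    have := Real.log_le_sub_one_of_pos (show (0:ℝ) < 1 + (K * c ^ 2)⁻¹ by positivity)
    linarith
  -- second term: L * (K*c^2)⁻¹ ≤ 1, i.e. 2 log(Kc) ≤ log u * (K c²)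
  have hkey : 2 * Real.log (K * c) ≤ Real.log u * (K * c ^ 2) := by
    have ht5 : (5 : ℝ) ≤ K * c := by nlinarith
    have h := aux_two_log_le (K * c) ht5
    have hc2 : K * c ≤ K * c ^ 2 := by nlinarith
    have htc : Real.log 2 * (K * c) ≤ Real.log u * (K * c ^ 2) :=
      calc Real.log 2 * (K * c) ≤ Real.log u * (K * c) :=
            mul_le_mul_of_nonneg_right hlnu (by positivity)
        _ ≤ Real.log u * (K * c ^ 2) := mul_le_mul_of_nonneg_left hc2 hlnupos.le
    linarith
  have hterm2 : L * (K * c ^ 2)⁻¹ ≤ 1 := by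
    rw [hLdef, div_mul_eq_mul_div, div_le_one hlnupos]
    rw [mul_comm (2 * Real.log (K * c)) _]
    calc (K * c ^ 2)⁻¹ * (2 * Real.log (K * c)) ≤ (K * c ^ 2)⁻¹ * (Real.log u * (K * c ^ 2)) := by
          apply mul_le_mul_of_nonneg_left hkey (by positivity)
      _ = Real.log u := by field_simp
  -- first term
  have hterm1 : L * Real.log (K * c ^ 2) ≤ 8 * a ^ 2 / Real.log u + 8 / Real.log u * b ^ 2 := by
    rw [hLdef, hlnt, hlnKc2, div_mul_eq_mul_div]
    have hnum : 2 * (a + b) * (a + 2 * b) ≤ 8 * a ^ 2 + 8 * b ^ 2 := by nlinarith [sq_nonneg (a - b), mul_nonneg ha0 hb0]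
    calc 2 * (a + b) * (a + 2 * b) / Real.log u ≤ (8 * a ^ 2 + 8 * b ^ 2) / Real.log u := by
          exact div_le_div_of_nonneg_right hnum hlnupos.le
      _ = 8 * a ^ 2 / Real.log u + 8 / Real.log u * b ^ 2 := by field_simp
  -- assemble exponent bound
  have hlogS0 : 0 ≤ Real.log (1 + K * c ^ 2) := Real.log_nonneg (by nlinarith)
  have hexp : ((M : ℝ) + 1) * Real.log (1 + K * c ^ 2) ≤
      1 + 8 * a ^ 2 / Real.log u + 8 / Real.log u * b ^ 2 := by
    have h2 : ((M : ℝ) + 1) * Real.log (1 + K * c ^ 2) ≤ L * Real.log (1 + K * c ^ 2) :=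
      mul_le_mul_of_nonneg_right hM hlogS0
    have h3 : L * Real.log (1 + K * c ^ 2) ≤ L * (Real.log (K * c ^ 2) + (K * c ^ 2)⁻¹) :=
      mul_le_mul_of_nonneg_left hsplit hL0
    have h4 : L * (Real.log (K * c ^ 2) + (K * c ^ 2)⁻¹)
        = L * Real.log (K * c ^ 2) + L * (K * c ^ 2)⁻¹ := by ring
    linarith
  calc (1 + c * u ^ ξ) ^ (M + 1) ≤ (1 + K * c ^ 2) ^ (M + 1) := h1
    _ = Real.exp (((M : ℝ) + 1) * Real.log (1 + K * c ^ 2)) := by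
        rw [← Real.rpow_natCast (1 + K * c ^ 2) (M + 1), Real.rpow_def_of_pos hSpos]
        congr 1
        push_cast
        ring
    _ ≤ Real.exp (1 + 8 * a ^ 2 / Real.log u + 8 / Real.log u * b ^ 2) := Real.exp_le_exp.mpr hexp
    _ = Real.exp 1 * Real.exp (8 * a ^ 2 / Real.log u) * Real.exp (8 / Real.log u * b ^ 2) := by
        rw [← Real.exp_add, ← Real.exp_add]
end
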